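/- Under the assumptions of the abstract localization estimate and the orthogonal-grouping estimate, the localized error estimator Δ_loc(ũ) := (1/α) c_pu (Σ_{ξ∈Υ} ‖R(ũ)‖²_{O_ξ'})^{1/2} is robust and efficient: ‖u − ũ‖ ≤ Δ_loc(ũ) ≤ (γ √J c_pu / α) ‖u − ũ‖, provided ũ lies in a subspace Ṽ on which the residual R(ũ) vanishes (i.e., ũ is the Galerkin projection onto Ṽ). -/

import Mathlib

set_option maxHeartbeats 1000000
set_option synthInstance.maxHeartbeats 1000000


/-- Robustness and efficiency of the localized a posteriori error estimator
`Δ_loc(ũ) = (1/α) c_pu (∑_ξ ‖R(ũ)‖²_{O_ξ'})^{1/2}` for the Galerkin projection `ũ`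
onto the reduced space `Ṽ`. -/
theorem stmt_4 {V : Type*} [NormedAddCommGroup V] [InnerProductSpace ℝ V] [CompleteSpace V]
    {ι : Type*} [Fintype ι]
    (O : ι → Submodule ℝ V) (hclosed : ∀ ξ, IsClosed ((O ξ) : Set V))
    (P : ι → V →L[ℝ] V)
    (hrange : ∀ ξ, ∀ v : V, P ξ v ∈ O ξ)
    (hsum : ∀ v : V, ∑ ξ, P ξ v = v)
    (Vt : Submodule ℝ V) (c : ℝ)
    (hc : ∀ φ : V, φ ≠ 0 →
      Real.sqrt (∑ ξ, ⨅ w : (Vt ⊓ O ξ : Submodule ℝ V), ‖P ξ φ - (w : V)‖ ^ 2) / ‖φ‖ ≤ c)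
    (J : ℕ) (g : ι → Fin J)
    (horth : ∀ ξ₁ ξ₂, g ξ₁ = g ξ₂ → ξ₁ ≠ ξ₂ →
      ∀ x ∈ O ξ₁, ∀ y ∈ O ξ₂, (inner ℝ x y : ℝ) = 0)
    (a : V →ₗ[ℝ] V →ₗ[ℝ] ℝ) (α γ : ℝ) (hα : 0 < α)
    (hcoer : ∀ v : V, α * ‖v‖ ^ 2 ≤ a v v)
    (hcont : ∀ u v : V, |a u v| ≤ γ * ‖u‖ * ‖v‖)
    (f : V →L[ℝ] ℝ) (u uN : V)
    (hu : ∀ v : V, a u v = f v)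
    (huN : uN ∈ Vt)
    (hgal : ∀ v ∈ Vt, a uN v = f v)
    (R : V →L[ℝ] ℝ) (hR : ∀ v : V, R v = f v - a uN v) :
    ‖u - uN‖ ≤ (1 / α) * c * Real.sqrt (∑ ξ, ‖R.comp (O ξ).subtypeL‖ ^ 2) ∧
    (1 / α) * c * Real.sqrt (∑ ξ, ‖R.comp (O ξ).subtypeL‖ ^ 2) ≤
      (γ * Real.sqrt J * c / α) * ‖u - uN‖ := by
  classical
  have hRe : ∀ v : V, R v = a (u - uN) v := fun v => by
    rw [hR v, ← hu v, map_sub, LinearMap.sub_apply]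
  have hRVt : ∀ w ∈ Vt, R w = 0 := fun w hw => by rw [hR w, hgal w hw, sub_self]
  have hNnn : ∀ ξ, (0:ℝ) ≤ ‖R.comp (O ξ).subtypeL‖ := fun ξ => ContinuousLinearMap.opNorm_nonneg _
  have hRz : ∀ ξ, ∀ z : V, z ∈ O ξ → |R z| ≤ ‖R.comp (O ξ).subtypeL‖ * ‖z‖ := by
    intro ξ z hz
    have h := (R.comp (O ξ).subtypeL).le_opNorm ⟨z, hz⟩
    simpa using h
  by_cases hz : u - uN = 0
  · have hN0 : ∀ ξ, ‖R.comp (O ξ).subtypeL‖ = 0 := by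
      intro ξ
      have h0 : R.comp (O ξ).subtypeL = 0 := by
        ext x
        simp [hRe, hz]
      rw [h0]; exact ContinuousLinearMap.opNorm_zero
    rw [hz]
    simp only [hN0, norm_zero]
    norm_num
  -- main case
  have hE : (0:ℝ) < ‖u - uN‖ := norm_pos_iff.mpr hz
  have hc0 : 0 ≤ c :=
    le_trans (div_nonneg (Real.sqrt_nonneg _) (norm_nonneg _)) (hc _ hz)
  have hγ : 0 ≤ γ := by
    have h1 := hcont (u - uN) (u - uN)
    have h2 := abs_nonneg (a (u - uN) (u - uN))
    nlinarith [mul_pos hE hE]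
  haveI hne : ∀ ξ, Nonempty ↥(Vt ⊓ O ξ : Submodule ℝ V) := fun ξ => ⟨0⟩
  have hD0 : ∀ ξ, (0:ℝ) ≤ ⨅ w : (Vt ⊓ O ξ : Submodule ℝ V), ‖P ξ (u - uN) - (w : V)‖ ^ 2 :=
    fun ξ => le_ciInf fun w => sq_nonneg _
  -- key pointwise bound
  have hkey : ∀ ξ, R (P ξ (u - uN)) ≤ ‖R.comp (O ξ).subtypeL‖ *
      Real.sqrt (⨅ w : (Vt ⊓ O ξ : Submodule ℝ V), ‖P ξ (u - uN) - (w : V)‖ ^ 2) := by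
    intro ξ
    have hbound : ∀ w : ↥(Vt ⊓ O ξ : Submodule ℝ V),
        (R (P ξ (u - uN))) ^ 2 ≤ ‖R.comp (O ξ).subtypeL‖ ^ 2 * ‖P ξ (u - uN) - (w : V)‖ ^ 2 := by
      intro w
      have hw1 : (w : V) ∈ Vt := (Submodule.mem_inf.mp w.2).1
      have hmem : P ξ (u - uN) - (w : V) ∈ O ξ := sub_mem (hrange ξ _) (Submodule.mem_inf.mp w.2).2
      have h1 : R (P ξ (u - uN)) = R (P ξ (u - uN) - (w : V)) := by
        rw [map_sub R (P ξ (u - uN)) ((w : V)), hRVt _ hw1, sub_zero]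
      have h2 := hRz ξ _ hmem
      have h3 := abs_nonneg (R (P ξ (u - uN) - (w : V)))
      have h4 := le_abs_self (R (P ξ (u - uN) - (w : V)))
      have h5 := neg_abs_le (R (P ξ (u - uN) - (w : V)))
      rw [h1]
      nlinarith [norm_nonneg (P ξ (u - uN) - (w : V)), hNnn ξ]
    rcases le_or_gt (R (P ξ (u - uN))) 0 with h | h
    · exact h.trans (mul_nonneg (hNnn ξ) (Real.sqrt_nonneg _))
    · have heq : ‖R.comp (O ξ).subtypeL‖ *
          Real.sqrt (⨅ w : (Vt ⊓ O ξ : Submodule ℝ V), ‖P ξ (u - uN) - (w : V)‖ ^ 2)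
          = Real.sqrt (‖R.comp (O ξ).subtypeL‖ ^ 2 *
            ⨅ w : (Vt ⊓ O ξ : Submodule ℝ V), ‖P ξ (u - uN) - (w : V)‖ ^ 2) := by
        rw [Real.sqrt_mul (sq_nonneg _), Real.sqrt_sq (hNnn ξ)]
      rw [heq]
      apply Real.le_sqrt_of_sq_le
      -- show (R (P ξ e))^2 ≤ N² * inf
      rcases eq_or_lt_of_le (hNnn ξ) with h0 | h0
      · exfalso
        have h2 := hbound 0
        rw [← h0] at h2
        simp only [ne_eq, OfNat.ofNat_ne_zero, not_false_eq_true, zero_pow, zero_mul] at h2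
        nlinarith
      · have hdiv : (R (P ξ (u - uN))) ^ 2 / ‖R.comp (O ξ).subtypeL‖ ^ 2 ≤
            ⨅ w : (Vt ⊓ O ξ : Submodule ℝ V), ‖P ξ (u - uN) - (w : V)‖ ^ 2 := by
          apply le_ciInf
          intro w
          rw [div_le_iff₀ (by positivity)]
          nlinarith [hbound w]
        rw [div_le_iff₀ (by positivity)] at hdiv
        nlinarith [hdiv]
  -- Step A: coercivity + partition
  have hA : α * ‖u - uN‖ ^ 2 ≤ ∑ ξ, ‖R.comp (O ξ).subtypeL‖ *
      Real.sqrt (⨅ w : (Vt ⊓ O ξ : Submodule ℝ V), ‖P ξ (u - uN) - (w : V)‖ ^ 2) := by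
    have h1 : α * ‖u - uN‖ ^ 2 ≤ R (u - uN) := by rw [hRe]; exact hcoer _
    have h2 : R (u - uN) = ∑ ξ, R (P ξ (u - uN)) := by
      conv_lhs => rw [← hsum (u - uN)]
      rw [map_sum]
    rw [h2] at h1
    exact h1.trans (Finset.sum_le_sum fun ξ _ => hkey ξ)
  -- Step B: Cauchy-Schwarz + hc
  have hB : (∑ ξ, ‖R.comp (O ξ).subtypeL‖ *
      Real.sqrt (⨅ w : (Vt ⊓ O ξ : Submodule ℝ V), ‖P ξ (u - uN) - (w : V)‖ ^ 2)) ≤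
      Real.sqrt (∑ ξ, ‖R.comp (O ξ).subtypeL‖ ^ 2) * (c * ‖u - uN‖) := by
    have cs := Finset.sum_mul_sq_le_sq_mul_sq Finset.univ
      (fun ξ => ‖R.comp (O ξ).subtypeL‖)
      (fun ξ => Real.sqrt (⨅ w : (Vt ⊓ O ξ : Submodule ℝ V), ‖P ξ (u - uN) - (w : V)‖ ^ 2))
    have hsq : ∑ ξ, (Real.sqrt (⨅ w : (Vt ⊓ O ξ : Submodule ℝ V), ‖P ξ (u - uN) - (w : V)‖ ^ 2)) ^ 2
        = ∑ ξ, ⨅ w : (Vt ⊓ O ξ : Submodule ℝ V), ‖P ξ (u - uN) - (w : V)‖ ^ 2 :=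
      Finset.sum_congr rfl fun ξ _ => Real.sq_sqrt (hD0 ξ)
    have h1 : (∑ ξ, ‖R.comp (O ξ).subtypeL‖ *
        Real.sqrt (⨅ w : (Vt ⊓ O ξ : Submodule ℝ V), ‖P ξ (u - uN) - (w : V)‖ ^ 2)) ≤
        Real.sqrt ((∑ ξ, ‖R.comp (O ξ).subtypeL‖ ^ 2) *
          ∑ ξ, ⨅ w : (Vt ⊓ O ξ : Submodule ℝ V), ‖P ξ (u - uN) - (w : V)‖ ^ 2) := by
      apply Real.le_sqrt_of_sq_le
      rw [← hsq]
      exact cs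
    have h2 : Real.sqrt ((∑ ξ, ‖R.comp (O ξ).subtypeL‖ ^ 2) *
          ∑ ξ, ⨅ w : (Vt ⊓ O ξ : Submodule ℝ V), ‖P ξ (u - uN) - (w : V)‖ ^ 2)
        = Real.sqrt (∑ ξ, ‖R.comp (O ξ).subtypeL‖ ^ 2) *
          Real.sqrt (∑ ξ, ⨅ w : (Vt ⊓ O ξ : Submodule ℝ V), ‖P ξ (u - uN) - (w : V)‖ ^ 2) :=
      Real.sqrt_mul (Finset.sum_nonneg fun ξ _ => sq_nonneg _) _
    have h3 : Real.sqrt (∑ ξ, ⨅ w : (Vt ⊓ O ξ : Submodule ℝ V), ‖P ξ (u - uN) - (w : V)‖ ^ 2)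
        ≤ c * ‖u - uN‖ := by
      have h4 := hc (u - uN) hz
      rwa [div_le_iff₀ hE] at h4
    calc (∑ ξ, ‖R.comp (O ξ).subtypeL‖ *
        Real.sqrt (⨅ w : (Vt ⊓ O ξ : Submodule ℝ V), ‖P ξ (u - uN) - (w : V)‖ ^ 2))
        ≤ Real.sqrt (∑ ξ, ‖R.comp (O ξ).subtypeL‖ ^ 2) *
          Real.sqrt (∑ ξ, ⨅ w : (Vt ⊓ O ξ : Submodule ℝ V), ‖P ξ (u - uN) - (w : V)‖ ^ 2) := by
          rw [← h2]; exact h1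
      _ ≤ Real.sqrt (∑ ξ, ‖R.comp (O ξ).subtypeL‖ ^ 2) * (c * ‖u - uN‖) :=
          mul_le_mul_of_nonneg_left h3 (Real.sqrt_nonneg _)
  -- first part
  have hfirst : ‖u - uN‖ ≤ (1 / α) * c * Real.sqrt (∑ ξ, ‖R.comp (O ξ).subtypeL‖ ^ 2) := by
    have hAB := hA.trans hB
    rw [show (1 / α) * c * Real.sqrt (∑ ξ, ‖R.comp (O ξ).subtypeL‖ ^ 2)
        = (c * Real.sqrt (∑ ξ, ‖R.comp (O ξ).subtypeL‖ ^ 2)) / α by ring]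
    rw [le_div_iff₀ hα]
    nlinarith [hE]
  refine ⟨hfirst, ?_⟩
  -- efficiency: per-group bound
  have hgrp : ∀ j : Fin J, ∑ ξ ∈ Finset.univ.filter (fun ξ => g ξ = j),
      ‖R.comp (O ξ).subtypeL‖ ^ 2 ≤ (γ * ‖u - uN‖) ^ 2 := by
    intro j
    set S := Finset.univ.filter (fun ξ => g ξ = j) with hS
    set T := ∑ ξ ∈ S, ‖R.comp (O ξ).subtypeL‖ ^ 2 with hT
    have hT0 : 0 ≤ T := Finset.sum_nonneg fun _ _ => sq_nonneg _
    have hM0 : 0 ≤ ∑ ξ ∈ S, ‖R.comp (O ξ).subtypeL‖ :=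
      Finset.sum_nonneg fun _ _ => ContinuousLinearMap.opNorm_nonneg _
    have hmain : T ≤ γ * ‖u - uN‖ * Real.sqrt T := by
      apply le_of_forall_pos_le_add
      intro ε hε
      set ε' := ε / (1 + ∑ ξ ∈ S, ‖R.comp (O ξ).subtypeL‖) with hε'def
      have hε' : 0 < ε' := div_pos hε (by positivity)
      have hch : ∀ ξ : ι, ∃ z : V, z ∈ O ξ ∧ ‖z‖ ≤ 1 ∧
          ‖R.comp (O ξ).subtypeL‖ - ε' ≤ R z := by
        intro ξ
        obtain ⟨x, hx1, hx2⟩ := (R.comp (O ξ).subtypeL).exists_lt_apply_of_lt_opNorm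
          (show ‖R.comp (O ξ).subtypeL‖ - ε' < ‖R.comp (O ξ).subtypeL‖ by linarith)
        have hx2' : ‖R.comp (O ξ).subtypeL‖ - ε' < |R (x : V)| := by simpa using hx2
        have hx1' : ‖(x : V)‖ ≤ 1 := le_of_lt hx1
        rcases le_or_gt 0 (R (x : V)) with h | h
        · exact ⟨x, x.2, hx1', le_of_lt (by rwa [abs_of_nonneg h] at hx2')⟩
        · refine ⟨-(x : V), neg_mem x.2, by simpa using hx1', ?_⟩
          rw [map_neg]
          rw [abs_of_neg h] at hx2'
          linarith
      choose v hv1 hv2 hv3 using hch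
      set w : V := ∑ ξ ∈ S, ‖R.comp (O ξ).subtypeL‖ • v ξ with hw
      have horthw : ∀ ξ₁ ∈ S, ∀ ξ₂ ∈ S, ξ₂ ≠ ξ₁ →
          (inner ℝ (‖R.comp (O ξ₁).subtypeL‖ • v ξ₁) (‖R.comp (O ξ₂).subtypeL‖ • v ξ₂) : ℝ) = 0 := by
        intro ξ₁ h1 ξ₂ h2 hne
        have hg1 : g ξ₁ = j := (Finset.mem_filter.mp h1).2
        have hg2 : g ξ₂ = j := (Finset.mem_filter.mp h2).2
        exact horth ξ₁ ξ₂ (hg1.trans hg2.symm) (Ne.symm hne)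
          _ (Submodule.smul_mem _ _ (hv1 ξ₁)) _ (Submodule.smul_mem _ _ (hv1 ξ₂))
      have hnormw : ‖w‖ ^ 2 ≤ T := by
        have h1 : (inner ℝ w w : ℝ) = ∑ ξ₁ ∈ S, ∑ ξ₂ ∈ S,
            (inner ℝ (‖R.comp (O ξ₁).subtypeL‖ • v ξ₁) (‖R.comp (O ξ₂).subtypeL‖ • v ξ₂) : ℝ) := by
          rw [hw]
          rw [sum_inner]
          exact Finset.sum_congr rfl fun ξ₁ _ => by rw [inner_sum]
        have h2 : (inner ℝ w w : ℝ) = ∑ ξ ∈ S,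
            (inner ℝ (‖R.comp (O ξ).subtypeL‖ • v ξ) (‖R.comp (O ξ).subtypeL‖ • v ξ) : ℝ) := by
          rw [h1]
          exact Finset.sum_congr rfl fun ξ₁ h₁ =>
            Finset.sum_eq_single_of_mem ξ₁ h₁ fun ξ₂ h₂ hne => horthw ξ₁ h₁ ξ₂ h₂ hne
        have h3 : ‖w‖ ^ 2 = ∑ ξ ∈ S,
            ‖R.comp (O ξ).subtypeL‖ ^ 2 * ‖v ξ‖ ^ 2 := by
          rw [← real_inner_self_eq_norm_sq, h2]
          refine Finset.sum_congr rfl fun ξ _ => ?_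
          rw [real_inner_smul_left, real_inner_smul_right, real_inner_self_eq_norm_sq]
          ring
        rw [h3, hT]
        refine Finset.sum_le_sum fun ξ _ => ?_
        have h5 : ‖v ξ‖ ^ 2 ≤ 1 := by nlinarith [hv2 ξ, norm_nonneg (v ξ)]
        exact mul_le_of_le_one_right (sq_nonneg _) h5
      have hwnorm : ‖w‖ ≤ Real.sqrt T := by
        rw [← Real.sqrt_sq (norm_nonneg w)]
        exact Real.sqrt_le_sqrt hnormw
      have hRw1 : ∑ ξ ∈ S, ‖R.comp (O ξ).subtypeL‖ * (‖R.comp (O ξ).subtypeL‖ - ε') ≤ R w := by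
        have : R w = ∑ ξ ∈ S, ‖R.comp (O ξ).subtypeL‖ * R (v ξ) := by
          rw [hw, map_sum]
          exact Finset.sum_congr rfl fun ξ _ => by rw [map_smul, smul_eq_mul]
        rw [this]
        exact Finset.sum_le_sum fun ξ _ =>
          mul_le_mul_of_nonneg_left (hv3 ξ) (hNnn ξ)
      have hRw2 : R w ≤ γ * ‖u - uN‖ * Real.sqrt T := by
        rw [hRe]
        calc a (u - uN) w ≤ |a (u - uN) w| := le_abs_self _
          _ ≤ γ * ‖u - uN‖ * ‖w‖ := hcont _ _
          _ ≤ γ * ‖u - uN‖ * Real.sqrt T :=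
              mul_le_mul_of_nonneg_left hwnorm (by positivity)
      have hεM : ε' * (∑ ξ ∈ S, ‖R.comp (O ξ).subtypeL‖) ≤ ε := by
        rw [hε'def, div_mul_eq_mul_div, div_le_iff₀ (by positivity)]
        nlinarith
      have hexp : T = ∑ ξ ∈ S, ‖R.comp (O ξ).subtypeL‖ * (‖R.comp (O ξ).subtypeL‖ - ε')
          + ε' * (∑ ξ ∈ S, ‖R.comp (O ξ).subtypeL‖) := by
        rw [hT, Finset.mul_sum, ← Finset.sum_add_distrib]
        exact Finset.sum_congr rfl fun ξ _ => by ring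
      linarith [hRw1.trans hRw2]
    nlinarith [Real.sq_sqrt hT0, Real.sqrt_nonneg T, sq_nonneg (Real.sqrt T - γ * ‖u - uN‖)]
  -- sum over groups
  have htot : ∑ ξ, ‖R.comp (O ξ).subtypeL‖ ^ 2 ≤ (J : ℝ) * (γ * ‖u - uN‖) ^ 2 := by
    rw [← Finset.sum_fiberwise Finset.univ g (fun ξ => ‖R.comp (O ξ).subtypeL‖ ^ 2)]
    calc ∑ j : Fin J, ∑ ξ ∈ Finset.univ.filter (fun ξ => g ξ = j), ‖R.comp (O ξ).subtypeL‖ ^ 2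
        ≤ ∑ _j : Fin J, (γ * ‖u - uN‖) ^ 2 := Finset.sum_le_sum fun j _ => hgrp j
      _ = (J : ℝ) * (γ * ‖u - uN‖) ^ 2 := by
          rw [Finset.sum_const, Finset.card_univ, Fintype.card_fin, nsmul_eq_mul]
  have hsqrtN : Real.sqrt (∑ ξ, ‖R.comp (O ξ).subtypeL‖ ^ 2) ≤
      Real.sqrt J * (γ * ‖u - uN‖) := by
    have heq : Real.sqrt ((J : ℝ) * (γ * ‖u - uN‖) ^ 2) = Real.sqrt J * (γ * ‖u - uN‖) := by
      rw [Real.sqrt_mul (Nat.cast_nonneg J), Real.sqrt_sq (by positivity)]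
    rw [← heq]
    exact Real.sqrt_le_sqrt htot
  calc (1 / α) * c * Real.sqrt (∑ ξ, ‖R.comp (O ξ).subtypeL‖ ^ 2)
      ≤ (1 / α) * c * (Real.sqrt J * (γ * ‖u - uN‖)) :=
        mul_le_mul_of_nonneg_left hsqrtN (mul_nonneg (by positivity) hc0)
    _ = (γ * Real.sqrt J * c / α) * ‖u - uN‖ := by ring
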